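/- Let A be a real symmetric positive definite n×n matrix and τ > 0. Then exp(τ·A) - 1 is invertible, and the matrix P := τ · A · (exp(τ·A) - 1)⁻¹ is symmetric and positive semidefinite, the matrix 1 - P is positive semidefinite (i.e., P ⪯ 1 in the Loewner order), and the matrix P + (τ/2)·A - 1 is positive semidefinite (i.e., P + (τ/2)·A ⪰ 1 in the Loewner order). -/

import Mathlib

open Matrix

private lemma key3 {x : ℝ} (hx : 0 ≤ x) : 2 * (Real.exp x - 1) ≤ x * (Real.exp x + 1) := by
  set f : ℝ → ℝ := fun t => t * (Real.exp t + 1) - 2 * (Real.exp t - 1) with hf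
  have hd : ∀ y : ℝ, HasDerivAt f
      (1 * (Real.exp y + 1) + y * Real.exp y - 2 * Real.exp y) y := by
    intro y
    exact (((hasDerivAt_id y).mul ((Real.hasDerivAt_exp y).add_const 1)).sub
      (((Real.hasDerivAt_exp y).sub_const 1).const_mul 2))
  have hmono : MonotoneOn f (Set.Ici (0 : ℝ)) := by
    apply monotoneOn_of_deriv_nonneg (convex_Ici 0)
    · exact Continuous.continuousOn (by continuity)
    · intro y _
      exact (hd y).differentiableAt.differentiableWithinAt
    · intro y hy
      rw [interior_Ici] at hy
      rw [(hd y).deriv]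
      have h1 : Real.exp y * (1 - y) ≤ 1 := by
        have h2 : 1 - y ≤ Real.exp (-y) := by
          have := Real.add_one_le_exp (-y); linarith
        calc Real.exp y * (1 - y) ≤ Real.exp y * Real.exp (-y) :=
              mul_le_mul_of_nonneg_left h2 (Real.exp_pos y).le
          _ = 1 := by rw [← Real.exp_add]; simp
      nlinarith
  have h0 : f 0 ≤ f x := hmono (Set.self_mem_Ici) hx hx
  have hf0 : f 0 = 0 := by simp [hf]
  simp only [hf] at h0 hf0
  linarith

/-- For a real symmetric positive definite matrix `A` and `τ > 0`, the matrix
`e^{τA} - 1` is invertible, and `P = τ • (A * (e^{τA} - 1)⁻¹)` is symmetric positive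
semidefinite with `P ⪯ 1` and `1 ⪯ P + (τ/2) • A` in the Loewner order.  This is the
matrix form of Lemma 2 of the paper concerning `Q(τA)` with `Q z = z / (e^z - 1)`. -/
theorem stmt3 {n : ℕ} (A : Matrix (Fin n) (Fin n) ℝ) (hA : A.PosDef) (hAsymm : A.IsSymm)
    (τ : ℝ) (hτ : 0 < τ) :
    IsUnit (NormedSpace.exp (τ • A) - 1) ∧
    (τ • (A * (NormedSpace.exp (τ • A) - 1)⁻¹)).IsSymm ∧
    (τ • (A * (NormedSpace.exp (τ • A) - 1)⁻¹)).PosSemidef ∧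
    ((1 : Matrix (Fin n) (Fin n) ℝ)
      - τ • (A * (NormedSpace.exp (τ • A) - 1)⁻¹)).PosSemidef ∧
    (τ • (A * (NormedSpace.exp (τ • A) - 1)⁻¹) + (τ / 2) • A
      - (1 : Matrix (Fin n) (Fin n) ℝ)).PosSemidef := by
  classical
  have hH : A.IsHermitian := hA.1
  set U : Matrix (Fin n) (Fin n) ℝ := (hH.eigenvectorUnitary : Matrix (Fin n) (Fin n) ℝ)
    with hUdef
  have hU2 : U * star U = 1 := (Matrix.mem_unitaryGroup_iff).mp hH.eigenvectorUnitary.2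
  have hU1 : star U * U = 1 := (Matrix.mem_unitaryGroup_iff').mp hH.eigenvectorUnitary.2
  have hUunit : IsUnit U := (Matrix.isUnit_iff_isUnit_det _).mpr (Matrix.isUnit_det_of_right_inverse hU2)
  have hUinv : U⁻¹ = star U := Matrix.inv_eq_right_inv hU2
  set e : Fin n → ℝ := hH.eigenvalues with hedef
  have he : ∀ i, 0 < e i := fun i => hA.eigenvalues_pos i
  set M : (Fin n → ℝ) → Matrix (Fin n) (Fin n) ℝ :=
    fun g => U * diagonal g * star U with hMdef
  have hMmul : ∀ g h : Fin n → ℝ, M g * M h = M (fun i => g i * h i) := by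
    intro g h
    simp only [hMdef]
    calc (U * diagonal g * star U) * (U * diagonal h * star U)
        = U * diagonal g * (star U * U) * (diagonal h * star U) := by
          simp only [mul_assoc]
      _ = U * (diagonal g * diagonal h) * star U := by
          rw [hU1]; simp only [mul_one, mul_assoc]
      _ = U * diagonal (fun i => g i * h i) * star U := by
          rw [diagonal_mul_diagonal]
  have hMone : M (fun _ => 1) = 1 := by
    simp only [hMdef, diagonal_one, mul_one, hU2]
  have hMsub : ∀ g h : Fin n → ℝ, M g - M h = M (fun i => g i - h i) := by
    intro g h
    have : diagonal (fun i => g i - h i) = diagonal g - diagonal h := by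
      rw [diagonal_sub]
    simp only [hMdef, this, Matrix.mul_sub, Matrix.sub_mul]
  have hMadd : ∀ g h : Fin n → ℝ, M g + M h = M (fun i => g i + h i) := by
    intro g h
    have : diagonal (fun i => g i + h i) = diagonal g + diagonal h := by
      rw [diagonal_add]
    simp only [hMdef, this, Matrix.mul_add, Matrix.add_mul]
  have hMsmul : ∀ (c : ℝ) (g : Fin n → ℝ), c • M g = M (fun i => c * g i) := by
    intro c g
    have : diagonal (fun i => c * g i) = c • diagonal g := by
      rw [← diagonal_smul]; congr 1
    simp only [hMdef, this, Matrix.smul_mul, Matrix.mul_smul]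
  have hspecA : A = M e := by
    have h := hH.spectral_theorem
    simpa [hMdef, hedef, hUdef, RCLike.ofReal_real_eq_id] using h
  have hτA : τ • A = M (fun i => τ * e i) := by
    rw [hspecA, hMsmul]
  have hexp : ∀ g : Fin n → ℝ,
      NormedSpace.exp (M g) = M (fun i => Real.exp (g i)) := by
    intro g
    rw [hMdef]
    rw [← hUinv, Matrix.exp_conj U (diagonal g) hUunit, Matrix.exp_diagonal]
    congr 1
    · congr 1
      rw [Pi.exp_def]
      funext i
      rw [Real.exp_eq_exp_ℝ]
  have hE1 : NormedSpace.exp (τ • A) - 1 = M (fun i => Real.exp (τ * e i) - 1) := by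
    rw [hτA, hexp, ← hMone, hMsub]
  have hgpos : ∀ i, 0 < Real.exp (τ * e i) - 1 := by
    intro i
    have hx : 0 < τ * e i := mul_pos hτ (he i)
    have := Real.add_one_le_exp (τ * e i)
    linarith
  have hInvMul : M (fun i => Real.exp (τ * e i) - 1) *
      M (fun i => (Real.exp (τ * e i) - 1)⁻¹) = 1 := by
    rw [hMmul]
    have : (fun i => (Real.exp (τ * e i) - 1) * (Real.exp (τ * e i) - 1)⁻¹)
        = fun _ : Fin n => (1 : ℝ) := by
      funext i
      exact mul_inv_cancel₀ (hgpos i).ne'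
    rw [this, hMone]
  have hIsUnit : IsUnit (NormedSpace.exp (τ • A) - 1) := by
    rw [hE1]; exact (Matrix.isUnit_iff_isUnit_det _).mpr (Matrix.isUnit_det_of_right_inverse hInvMul)
  have hEinv : (NormedSpace.exp (τ • A) - 1)⁻¹ =
      M (fun i => (Real.exp (τ * e i) - 1)⁻¹) := by
    rw [hE1]; exact Matrix.inv_eq_right_inv hInvMul
  set q : Fin n → ℝ := fun i => τ * e i * (Real.exp (τ * e i) - 1)⁻¹ with hqdef
  have hP : τ • (A * (NormedSpace.exp (τ • A) - 1)⁻¹) = M q := by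
    rw [hEinv, hspecA, hMmul, hMsmul]
    congr 1
    funext i
    simp [hqdef, mul_assoc]
  have hMpsd : ∀ g : Fin n → ℝ, (∀ i, 0 ≤ g i) → (M g).PosSemidef := by
    intro g hg
    have hdg : (diagonal g).PosSemidef := posSemidef_diagonal_iff.mpr hg
    have := hdg.mul_mul_conjTranspose_same U
    simpa [hMdef, Matrix.star_eq_conjTranspose] using this
  -- scalar facts about q
  have hq0 : ∀ i, 0 ≤ q i := by
    intro i
    exact mul_nonneg (mul_pos hτ (he i)).le (inv_nonneg.mpr (hgpos i).le)
  have hq1 : ∀ i, q i ≤ 1 := by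
    intro i
    show τ * e i * (Real.exp (τ * e i) - 1)⁻¹ ≤ 1
    rw [← div_eq_mul_inv, div_le_one (hgpos i)]
    have := Real.add_one_le_exp (τ * e i)
    linarith
  have hq2 : ∀ i, 0 ≤ q i + τ / 2 * e i - 1 := by
    intro i
    set x := τ * e i with hxdef
    have hx : 0 < x := mul_pos hτ (he i)
    have hd : 0 < Real.exp x - 1 := hgpos i
    have h3 := key3 hx.le
    have hdiv : 1 - x / 2 ≤ x / (Real.exp x - 1) := by
      rw [le_div_iff₀ hd]
      nlinarith
    have hq : q i = x / (Real.exp x - 1) := by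
      simp only [hqdef]; rw [div_eq_mul_inv]
    have hx2 : τ / 2 * e i = x / 2 := by rw [hxdef]; ring
    rw [hq, hx2]
    linarith
  refine ⟨hIsUnit, ?_, ?_, ?_, ?_⟩
  · rw [hP]
    have h1 := (hMpsd q hq0).isHermitian
    rwa [Matrix.IsHermitian, conjTranspose_eq_transpose_of_trivial] at h1
  · rw [hP]; exact hMpsd q hq0
  · rw [hP, ← hMone, hMsub]
    exact hMpsd _ (fun i => by simpa using sub_nonneg.mpr (hq1 i))
  · have h2A : (τ / 2) • A = M (fun i => τ / 2 * e i) := by rw [hspecA, hMsmul]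
    rw [hP, h2A, hMadd, ← hMone, hMsub]
    exact hMpsd _ (fun i => hq2 i)
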